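/- Let G be a graph and suppose the auxiliary graph G⁺ contains an odd cycle e_0 e_1 … e_{2p} in which all edges e_i share a common end vertex u, with e_i = u v_i. Then v_0 v_1 … v_{2p} v_0 is a closed walk of odd length in the complement of G, and hence the complement of G contains an induced odd cycle. -/
import Mathlib


open SimpleGraph

/-- Two edges `e`, `f` of `G` form an induced path of length 2 (adjacency in the
auxiliary graph `G⁺`). -/
def AuxAdj {V : Type*} (G : SimpleGraph V) (e f : Sym2 V) : Prop :=
  ∃ u v w : V, G.Adj u v ∧ G.Adj u w ∧ v ≠ w ∧ ¬ G.Adj v w ∧ e = s(u, v) ∧ f = s(u, w)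

/-- In a graph with an odd "closed walk" (given as a function) there is an induced
odd cycle. -/
lemma exists_induced_odd_cycle {V : Type*} (H : SimpleGraph V) (n : ℕ) (hodd : Odd n)
    (x : ℕ → V) (hx : ∀ i < n, H.Adj (x i) (x ((i + 1) % n))) :
    ∃ m : ℕ, Odd m ∧ 3 ≤ m ∧ Nonempty (SimpleGraph.cycleGraph m ↪g H) := by
  classical
  set Q : ℕ → Prop := fun m => Odd m ∧ ∃ y : ℕ → V, ∀ i < m, H.Adj (y i) (y ((i + 1) % m))
    with hQdef
  have hQn : Q n := ⟨hodd, x, hx⟩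
  have hex : ∃ m, Q m := ⟨n, hQn⟩
  set m := Nat.find hex with hmdef
  obtain ⟨hm_odd, y, hy⟩ := Nat.find_spec hex
  rw [← hmdef] at hm_odd hy
  have hmin : ∀ k < m, ¬ Q k := fun k hk => Nat.find_min hex hk
  have hm0 : 0 < m := hm_odd.pos
  -- step lemma: we can walk from any index
  have step : ∀ k : ℕ, H.Adj (y (k % m)) (y ((k + 1) % m)) := by
    intro k
    have := hy (k % m) (Nat.mod_lt _ hm0)
    rwa [Nat.mod_add_mod] at this
  have hm1 : m ≠ 1 := by
    intro h1
    have h2 := hy 0 (by omega)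
    have h3 : H.Adj (y 0) (y 0) := by simpa [h1] using h2
    exact h3.ne rfl
  have hm3 : 3 ≤ m := by
    rcases hm_odd with ⟨k, hk⟩
    omega
  -- injectivity of y on [0, m)
  have inj : ∀ i j, i < j → j < m → y i ≠ y j := by
    intro i j hij hjm heq
    set d := j - i with hd
    have hd0 : 0 < d := by omega
    have hdm : d < m := by omega
    -- closed walk of length d
    have Pd : ∃ z : ℕ → V, ∀ a < d, H.Adj (z a) (z ((a + 1) % d)) := by
      refine ⟨fun a => y (i + a), fun a ha => ?_⟩
      by_cases hlast : a + 1 < d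
      · rw [Nat.mod_eq_of_lt hlast]
        have := hy (i + a) (by omega)
        rwa [Nat.mod_eq_of_lt (by omega)] at this
      · have ha1 : a + 1 = d := by omega
        have := hy (i + a) (by omega)
        rw [Nat.mod_eq_of_lt (by omega)] at this
        have hidx : i + a + 1 = j := by omega
        rw [hidx] at this
        rw [ha1, Nat.mod_self]
        simpa [heq] using this
    -- closed walk of length m - d
    have Pnd : ∃ z : ℕ → V, ∀ a < m - d, H.Adj (z a) (z ((a + 1) % (m - d))) := by
      refine ⟨fun a => y ((j + a) % m), fun a ha => ?_⟩
      by_cases hlast : a + 1 < m - d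
      · rw [Nat.mod_eq_of_lt hlast]
        have := step (j + a)
        rwa [show j + a + 1 = j + (a + 1) by omega] at this
      · have ha1 : a + 1 = m - d := by omega
        have := step (j + a)
        have hidx : j + a + 1 = i + m := by omega
        rw [hidx] at this
        rw [Nat.add_mod_right i m, Nat.mod_eq_of_lt (by omega : i < m)] at this
        rw [ha1, Nat.mod_self]
        show H.Adj (y ((j + a) % m)) (y ((j + 0) % m))
        rw [Nat.add_zero, Nat.mod_eq_of_lt hjm]
        simpa [heq] using this
    rcases Nat.even_or_odd d with hE | hO
    · have hOsub : Odd (m - d) := Nat.Odd.sub_even (by omega) hm_odd hE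
      exact hmin (m - d) (by omega) ⟨hOsub, Pnd⟩
    · exact hmin d hdm ⟨hO, Pd⟩
  -- no chords
  have chord : ∀ i j, i < j → j < m → H.Adj (y i) (y j) → j - i = 1 ∨ j - i = m - 1 := by
    intro i j hij hjm hadj
    by_contra hcon
    push_neg at hcon
    set d := j - i with hd
    have hd2 : 2 ≤ d := by omega
    have hdm : d ≤ m - 2 := by omega
    -- closed walk of length d + 1
    have P1 : ∃ z : ℕ → V, ∀ a < d + 1, H.Adj (z a) (z ((a + 1) % (d + 1))) := by
      refine ⟨fun a => y (i + a), fun a ha => ?_⟩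
      by_cases hlast : a + 1 < d + 1
      · rw [Nat.mod_eq_of_lt hlast]
        have := hy (i + a) (by omega)
        rwa [Nat.mod_eq_of_lt (by omega)] at this
      · have ha1 : a = d := by omega
        rw [ha1, Nat.mod_self]
        show H.Adj (y (i + d)) (y (i + 0))
        rw [show i + d = j by omega, Nat.add_zero]
        exact hadj.symm
    -- closed walk of length m - d + 1
    have P2 : ∃ z : ℕ → V, ∀ a < m - d + 1, H.Adj (z a) (z ((a + 1) % (m - d + 1))) := by
      refine ⟨fun a => y ((j + a) % m), fun a ha => ?_⟩
      by_cases hlast : a + 1 < m - d + 1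
      · rw [Nat.mod_eq_of_lt hlast]
        have := step (j + a)
        rwa [show j + a + 1 = j + (a + 1) by omega] at this
      · have ha1 : a = m - d := by omega
        rw [ha1, Nat.mod_self]
        show H.Adj (y ((j + (m - d)) % m)) (y ((j + 0) % m))
        rw [show j + (m - d) = i + m by omega, Nat.add_mod_right i m,
          Nat.mod_eq_of_lt (by omega : i < m), Nat.add_zero, Nat.mod_eq_of_lt hjm]
        exact hadj
    rcases Nat.even_or_odd d with hE | hO
    · exact hmin (d + 1) (by omega) ⟨hE.add_one, P1⟩
    · have : Even (m - d) := Nat.Odd.sub_odd hm_odd hO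
      exact hmin (m - d + 1) (by omega) ⟨this.add_one, P2⟩
  -- construct the embedding
  refine ⟨m, hm_odd, hm3, ⟨?_⟩⟩
  have hinj : Function.Injective (fun k : Fin m => y k.val) := by
    intro a b hab
    simp only at hab
    rcases lt_trichotomy a.val b.val with hlt | heq | hgt
    · exact absurd hab (inj a.val b.val hlt b.isLt)
    · exact Fin.ext heq
    · exact absurd hab.symm (inj b.val a.val hgt a.isLt)
  refine ⟨⟨fun k : Fin m => y k.val, hinj⟩, ?_⟩
  intro a b
  simp only [Function.Embedding.coeFn_mk]
  rw [SimpleGraph.cycleGraph_adj']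
  constructor
  · intro hadj
    rcases lt_trichotomy a.val b.val with hlt | heq | hgt
    · rcases chord a.val b.val hlt b.isLt hadj with h1 | h1
      · right
        rw [Fin.sub_def]
        simp only
        rw [show m - a.val + b.val = m + 1 by omega, Nat.add_mod_left,
          Nat.mod_eq_of_lt (by omega)]
      · left
        have hb : b.val = m - 1 := by omega
        have ha : a.val = 0 := by omega
        rw [Fin.sub_def]
        simp only
        rw [hb, ha, show m - (m - 1) + 0 = 1 by omega, Nat.mod_eq_of_lt (by omega)]
    · exact absurd hadj (by rw [show a.val = b.val from heq]; exact H.irrefl)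
    · rcases chord b.val a.val hgt a.isLt hadj.symm with h1 | h1
      · left
        rw [Fin.sub_def]
        simp only
        rw [show m - b.val + a.val = m + 1 by omega, Nat.add_mod_left,
          Nat.mod_eq_of_lt (by omega)]
      · right
        have ha : a.val = m - 1 := by omega
        have hb : b.val = 0 := by omega
        rw [Fin.sub_def]
        simp only
        rw [ha, hb, show m - (m - 1) + 0 = 1 by omega, Nat.mod_eq_of_lt (by omega)]
  · rintro (h1 | h1)
    · -- a - b = 1, i.e. a = b + 1 mod m
      rw [Fin.sub_def] at h1
      simp only at h1
      have hb : a.val = (b.val + 1) % m := by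
        have h2 := h1
        rcases Nat.lt_or_ge (b.val + 1) m with hc | hc
        · rw [Nat.mod_eq_of_lt hc]
          rw [show m - b.val + a.val = (m - b.val - 1) + (a.val + 1) by omega] at h2
          rcases Nat.lt_or_ge (m - b.val + a.val) m with hc2 | hc2
          · rw [show (m - b.val - 1) + (a.val + 1) = m - b.val + a.val by omega,
              Nat.mod_eq_of_lt hc2] at h2
            omega
          · have hc3 : m - b.val + a.val < 2 * m := by omega
            rw [show (m - b.val - 1) + (a.val + 1) = (m - b.val + a.val - m) + m by omega,
              Nat.add_mod_right, Nat.mod_eq_of_lt (by omega)] at h2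
            omega
        · -- b.val + 1 ≥ m means b.val = m - 1
          have hbv : b.val = m - 1 := by omega
          rw [hbv] at h2
          rw [hbv, show m - 1 + 1 = m by omega, Nat.mod_self]
          rw [show m - (m - 1) + a.val = a.val + 1 by omega] at h2
          rcases Nat.lt_or_ge (a.val + 1) m with hc2 | hc2
          · rw [Nat.mod_eq_of_lt hc2] at h2
            omega
          · have hav : a.val = m - 1 := by omega
            rw [hav, show m - 1 + 1 = m by omega, Nat.mod_self] at h2
            omega
      have := step b.val
      rw [Nat.mod_eq_of_lt b.isLt, ← hb] at this
      exact this.symm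
    · -- b - a = 1, symmetric
      rw [Fin.sub_def] at h1
      simp only at h1
      have hb : b.val = (a.val + 1) % m := by
        have h2 := h1
        rcases Nat.lt_or_ge (a.val + 1) m with hc | hc
        · rw [Nat.mod_eq_of_lt hc]
          rcases Nat.lt_or_ge (m - a.val + b.val) m with hc2 | hc2
          · rw [Nat.mod_eq_of_lt hc2] at h2
            omega
          · have hc3 : m - a.val + b.val < 2 * m := by omega
            rw [show m - a.val + b.val = (m - a.val + b.val - m) + m by omega,
              Nat.add_mod_right, Nat.mod_eq_of_lt (by omega)] at h2
            omega
        · have hav : a.val = m - 1 := by omega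
          rw [hav] at h2
          rw [hav, show m - 1 + 1 = m by omega, Nat.mod_self]
          rw [show m - (m - 1) + b.val = b.val + 1 by omega] at h2
          rcases Nat.lt_or_ge (b.val + 1) m with hc2 | hc2
          · rw [Nat.mod_eq_of_lt hc2] at h2
            omega
          · have hbv : b.val = m - 1 := by omega
            rw [hbv, show m - 1 + 1 = m by omega, Nat.mod_self] at h2
            omega
      have := step a.val
      rw [Nat.mod_eq_of_lt a.isLt, ← hb] at this
      exact this

/-- If `G⁺` contains an odd closed walk `e_0 e_1 … e_{2p} e_0` whose edges all share
the common endpoint `u`, `e_i = u v_i`, then `v_0 v_1 … v_{2p} v_0` is an odd closed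
walk in `Gᶜ`, and hence `Gᶜ` contains an induced odd cycle. -/
theorem stmt_16 {V : Type*} (G : SimpleGraph V) (p : ℕ) (u : V) (v : ℕ → V)
    (h : ∀ i < 2 * p + 1, AuxAdj G s(u, v i) s(u, v ((i + 1) % (2 * p + 1)))) :
    (∀ i < 2 * p + 1, Gᶜ.Adj (v i) (v ((i + 1) % (2 * p + 1)))) ∧
      ∃ n : ℕ, Odd n ∧ 3 ≤ n ∧ Nonempty (SimpleGraph.cycleGraph n ↪g Gᶜ) := by
  have key : ∀ i < 2 * p + 1, Gᶜ.Adj (v i) (v ((i + 1) % (2 * p + 1))) := by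
    intro i hi
    obtain ⟨u', v', w', hadj1, hadj2, hne, hnadj, he, hf⟩ := h i hi
    rw [Sym2.eq_iff] at he hf
    rcases he with ⟨h1, h2⟩ | ⟨h1, h2⟩
    · rcases hf with ⟨h3, h4⟩ | ⟨h3, h4⟩
      · subst h1; subst h2; subst h4
        rw [SimpleGraph.compl_adj]
        exact ⟨hne, hnadj⟩
      · subst h1; subst h3
        exact (G.irrefl hadj2).elim
    · rcases hf with ⟨h3, h4⟩ | ⟨h3, h4⟩
      · subst h3; subst h1
        exact (G.irrefl hadj1).elim
      · subst h1; subst h3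
        exact (hne rfl).elim
  refine ⟨key, ?_⟩
  exact exists_induced_odd_cycle Gᶜ (2 * p + 1) ⟨p, by ring⟩ v key
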